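/- Let W be an n×n row-stochastic nonnegative matrix with index set V = {1,…,n} partitioned as V = V1 ∪ V2 with V2 nonempty and |V2| = n2. Suppose that no nonempty subset of V2 is a cohesive set of G(W). Then the elements of V2 can be enumerated as k_1, k_2, …, k_{n2} (a bijection onto V2) such that for every i ∈ {1,…,n2}: ∑_{l=1}^{i−1} w_{k_i k_l} + ∑_{j ∈ V1} w_{k_i j} > 1/2. -/

import Mathlib

open Finset Filter

/-- `m` is a weighted median of `x` associated with weight vector `ϑ`. -/
def IsWeightedMedian {n : ℕ} (ϑ : Fin n → ℝ) (x : Fin n → ℝ) (m : ℝ) : Prop :=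
  (∃ i, x i = m) ∧
    (∑ i ∈ Finset.univ.filter (fun i => x i < m), ϑ i) ≤ 1 / 2 ∧
    (∑ i ∈ Finset.univ.filter (fun i => m < x i), ϑ i) ≤ 1 / 2

/-- `W` is a nonnegative row-stochastic matrix. -/
def RowStochastic {n : ℕ} (W : Matrix (Fin n) (Fin n) ℝ) : Prop :=
  (∀ i j, 0 ≤ W i j) ∧ ∀ i, ∑ j, W i j = 1

/-- `Med` is a median selection for `W`: `Med x i` is a weighted median of `x`
associated with the `i`-th row of `W` which is closest to `x i` among all such
weighted medians. -/
def IsMedianSelection {n : ℕ} (W : Matrix (Fin n) (Fin n) ℝ)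
    (Med : (Fin n → ℝ) → Fin n → ℝ) : Prop :=
  ∀ x i, IsWeightedMedian (W i) x (Med x i) ∧
    ∀ m, IsWeightedMedian (W i) x m → |Med x i - x i| ≤ |m - x i|

/-- if no nonempty subset of `V2` is cohesive, the agents of `V2` can
be enumerated as `k₁, …, k_{n₂}` such that each `k_i` puts weight more than `1/2`
on `V1 ∪ {k₁, …, k_{i-1}}`. -/

lemma row_split_aux {n : ℕ} (W : Matrix (Fin n) (Fin n) ℝ) (hW : ∀ i, ∑ j, W i j = 1)
    {V1 V2 : Finset (Fin n)} (hdisj : Disjoint V1 V2) (hunion : V1 ∪ V2 = Finset.univ)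
    (i : Fin n) : ∑ j ∈ V1, W i j + ∑ j ∈ V2, W i j = 1 := by
  rw [← Finset.sum_union hdisj, hunion, hW i]

lemma list_enum_aux {n : ℕ} (W : Matrix (Fin n) (Fin n) ℝ) (hW : ∀ i, ∑ j, W i j = 1) :
    ∀ V2 : Finset (Fin n), ∀ V1 : Finset (Fin n), Disjoint V1 V2 → V1 ∪ V2 = Finset.univ →
    (∀ M : Finset (Fin n), M ⊆ V2 → M.Nonempty → ¬ ∀ i ∈ M, 1 / 2 ≤ ∑ j ∈ M, W i j) →
    ∃ L : List (Fin n), L.Nodup ∧ L.toFinset = V2 ∧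
      ∀ (m : ℕ) (h : m < L.length),
        1 / 2 < ∑ j ∈ V1 ∪ (L.take m).toFinset, W (L.get ⟨m, h⟩) j := by
  intro V2
  induction V2 using Finset.strongInduction with
  | _ V2 IH =>
    intro V1 hdisj hunion hnocoh
    rcases V2.eq_empty_or_nonempty with he | hne
    · refine ⟨[], by simp, by simp [he], by simp⟩
    · have hex : ∃ i ∈ V2, ∑ j ∈ V2, W i j < 1 / 2 := by
        have := hnocoh V2 subset_rfl hne
        push_neg at this
        exact this
      obtain ⟨i, hiV2, hi⟩ := hex
      have hss : V2.erase i ⊂ V2 := Finset.erase_ssubset hiV2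
      have hdisj' : Disjoint (insert i V1) (V2.erase i) := by
        rw [Finset.disjoint_insert_left]
        exact ⟨Finset.notMem_erase i V2, hdisj.mono_right (Finset.erase_subset i V2)⟩
      have hunion' : insert i V1 ∪ V2.erase i = Finset.univ := by
        rw [Finset.insert_union, ← Finset.union_insert, Finset.insert_erase hiV2, hunion]
      have hnocoh' : ∀ M : Finset (Fin n), M ⊆ V2.erase i → M.Nonempty →
          ¬ ∀ j ∈ M, 1 / 2 ≤ ∑ l ∈ M, W j l := fun M hM =>
        hnocoh M (hM.trans (Finset.erase_subset i V2))
      obtain ⟨L', hnd', htf', hL'⟩ := IH (V2.erase i) hss (insert i V1) hdisj' hunion' hnocoh'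
      have hinot : i ∉ L' := by
        rw [← List.mem_toFinset, htf']
        exact Finset.notMem_erase i V2
      refine ⟨i :: L', List.nodup_cons.mpr ⟨hinot, hnd'⟩, ?_, ?_⟩
      · simp [htf', Finset.insert_erase hiV2]
      · intro m h
        match m with
        | 0 =>
          simp only [List.take_zero, List.toFinset_nil, Finset.union_empty, List.get]
          have := row_split_aux W hW hdisj hunion i
          linarith
        | Nat.succ m =>
          have hm : m < L'.length := by simpa using h
          have := hL' m hm
          simp only [List.take_succ_cons, List.toFinset_cons, List.get_cons_succ]
          rw [Finset.union_insert, ← Finset.insert_union]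
          exact this


theorem no_cohesive_enumeration (n : ℕ) (W : Matrix (Fin n) (Fin n) ℝ)
    (hW : RowStochastic W) (V1 V2 : Finset (Fin n)) (hdisj : Disjoint V1 V2)
    (hunion : V1 ∪ V2 = Finset.univ) (hV2 : V2.Nonempty)
    (hnocoh : ∀ M : Finset (Fin n), M ⊆ V2 → M.Nonempty →
      ¬ ∀ i ∈ M, 1 / 2 ≤ ∑ j ∈ M, W i j) :
    ∃ k : Fin V2.card → Fin n, Function.Injective k ∧ (∀ a, k a ∈ V2) ∧
      ∀ a : Fin V2.card,
        1 / 2 < (∑ l ∈ Finset.univ.filter (fun l : Fin V2.card => l < a), W (k a) (k l)) +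
          ∑ j ∈ V1, W (k a) j := by

  obtain ⟨L, hnd, htf, hL⟩ := list_enum_aux W hW.2 V2 V1 hdisj hunion hnocoh
  have hlen : L.length = V2.card := by
    rw [← htf, List.toFinset_card_of_nodup hnd]
  refine ⟨fun a => L.get (Fin.cast hlen.symm a), ?_, ?_, ?_⟩
  · intro a b hab
    have := List.nodup_iff_injective_get.mp hnd hab
    simpa [Fin.ext_iff] using this
  · intro a
    have h1 : L.get (Fin.cast hlen.symm a) ∈ L.toFinset := List.mem_toFinset.mpr (L.get_mem _)
    rwa [htf] at h1
  · intro a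
    have ha : (a : ℕ) < L.length := by rw [hlen]; exact a.isLt
    have key : 1 / 2 < ∑ j ∈ V1 ∪ (L.take (a : ℕ)).toFinset,
        W (L.get (Fin.cast hlen.symm a)) j := hL a ha
    have htake : (L.take (a : ℕ)).toFinset ⊆ V2 := by
      have h2 : (L.take (a : ℕ)).toFinset ⊆ L.toFinset := by
        intro x hx
        rw [List.mem_toFinset] at hx ⊢
        exact List.mem_of_mem_take hx
      rwa [htf] at h2
    have hdisj2 : Disjoint V1 (L.take (a : ℕ)).toFinset := hdisj.mono_right htake
    rw [Finset.sum_union hdisj2] at key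
    have hsum : ∑ l ∈ Finset.univ.filter (fun l : Fin V2.card => l < a),
        W (L.get (Fin.cast hlen.symm a)) (L.get (Fin.cast hlen.symm l))
        = ∑ j ∈ (L.take (a : ℕ)).toFinset, W (L.get (Fin.cast hlen.symm a)) j := by
      apply Finset.sum_bij (fun (l : Fin V2.card) _ => L.get (Fin.cast hlen.symm l))
      · intro l hl
        simp only [Finset.mem_filter, Finset.mem_univ, true_and] at hl
        have hl' : (l : ℕ) < L.length := by rw [hlen]; exact l.isLt
        have hla : (l : ℕ) < (a : ℕ) := hl
        have h2 : (l : ℕ) < (L.take (a : ℕ)).length := by simp; omega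
        rw [List.mem_toFinset]
        have : (L.take (a : ℕ))[(l : ℕ)] = L[(l : ℕ)] := List.getElem_take (h := h2)
        rw [show L.get (Fin.cast hlen.symm l) = L[(l : ℕ)] from rfl, ← this]
        exact List.getElem_mem h2
      · intro l₁ _ l₂ _ h
        have := List.nodup_iff_injective_get.mp hnd h
        simpa [Fin.ext_iff] using this
      · intro j hj
        rw [List.mem_toFinset] at hj
        obtain ⟨m, hm, he⟩ := List.mem_iff_getElem.mp hj
        have hm' := hm
        simp only [List.length_take, lt_min_iff] at hm'
        have hmc : m < V2.card := by rw [← hlen]; exact hm'.2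
        refine ⟨⟨m, hmc⟩, ?_, ?_⟩
        · simp only [Finset.mem_filter, Finset.mem_univ, true_and]
          exact hm'.1
        · rw [show L.get (Fin.cast hlen.symm ⟨m, hmc⟩) = L[m] from rfl, ← he]
          exact (List.getElem_take (h := hm)).symm
      · intros; rfl
    dsimp only
    rw [hsum]
    linarith
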